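/- Let Γ be a finite simplicial graph with vertex groups, and Δ a full (induced) subgraph of Γ. Then the subgroup of the graph product G_Γ generated by the images of the vertex groups G_v for v ∈ Δ is canonically isomorphic to the graph product G_Δ. -/

import Mathlib

open scoped commutatorElement

variable {V : Type} (Γ : SimpleGraph V) (G : V → Type) [∀ v, Group (G v)]

/-- The normal subgroup of commutation relations defining the graph product. -/
def graphProductRels : Subgroup (Monoid.CoprodI G) :=
  Subgroup.normalClosure
    {x | ∃ (u w : V) (_ : Γ.Adj u w) (a : G u) (b : G w),
      x = ⁅Monoid.CoprodI.of a, Monoid.CoprodI.of b⁆}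

instance : (graphProductRels Γ G).Normal :=
  Subgroup.normalClosure_normal

/-- The graph product of the groups `G v` over the graph `Γ`. -/
def GraphProduct : Type :=
  Monoid.CoprodI G ⧸ graphProductRels Γ G

instance : Group (GraphProduct Γ G) :=
  inferInstanceAs (Group (Monoid.CoprodI G ⧸ graphProductRels Γ G))

/-- The canonical map of a vertex group into the graph product. -/
def gpOf (v : V) : G v →* GraphProduct Γ G :=
  (QuotientGroup.mk' (graphProductRels Γ G)).comp Monoid.CoprodI.of

lemma gpOf_commute {u w : V} (h : Γ.Adj u w) (a : G u) (b : G w) :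
    Commute (gpOf Γ G u a) (gpOf Γ G w b) := by
  rw [Commute, SemiconjBy, ← commutatorElement_eq_one_iff_mul_comm]
  show (QuotientGroup.mk' (graphProductRels Γ G)) ⁅Monoid.CoprodI.of a, Monoid.CoprodI.of b⁆ = 1
  rw [QuotientGroup.mk'_apply, QuotientGroup.eq_one_iff]
  exact Subgroup.subset_normalClosure ⟨u, w, h, a, b, rfl⟩

/-- The graph product over the full subgraph induced on a subset `S` of vertices. -/
def GPsub (S : Set V) : Type :=
  GraphProduct (SimpleGraph.comap ((↑) : S → V) Γ) (fun s => G s.1)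

instance (S : Set V) : Group (GPsub Γ G S) :=
  inferInstanceAs (Group (GraphProduct _ _))

/-- The canonical homomorphism from the graph product over an induced subgraph into the
graph product over the whole graph. -/
def ofSub (S : Set V) : GPsub Γ G S →* GraphProduct Γ G :=
  QuotientGroup.lift _ (Monoid.CoprodI.lift (fun s : S => gpOf Γ G s.1))
    (Subgroup.normalClosure_le_normal (by
      rintro x ⟨u, w, hadj, a, b, rfl⟩
      rw [SetLike.mem_coe, MonoidHom.mem_ker, map_commutatorElement]
      simp only [Monoid.CoprodI.lift_of]
      exact commutatorElement_eq_one_iff_commute.2 (gpOf_commute Γ G hadj a b)))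

/-- The canonical homomorphism between graph products over nested induced subgraphs. -/
def mapIncl {S T : Set V} (h : S ⊆ T) : GPsub Γ G S →* GPsub Γ G T :=
  QuotientGroup.lift _
    (Monoid.CoprodI.lift (fun s : S =>
      gpOf (SimpleGraph.comap ((↑) : T → V) Γ) (fun t => G t.1) (Set.inclusion h s)))
    (Subgroup.normalClosure_le_normal (by
      rintro x ⟨u, w, hadj, a, b, rfl⟩
      rw [SetLike.mem_coe, MonoidHom.mem_ker, map_commutatorElement]
      simp only [Monoid.CoprodI.lift_of]
      exact commutatorElement_eq_one_iff_commute.2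
        (gpOf_commute (SimpleGraph.comap ((↑) : T → V) Γ) (fun t => G t.1)
          (u := Set.inclusion h u) (w := Set.inclusion h w) hadj a b)))

open Classical in
/-- Retraction from the full graph product onto the subgraph product. -/
noncomputable def gpRetr (S : Set V) : GraphProduct Γ G →* GPsub Γ G S :=
  QuotientGroup.lift _
    (Monoid.CoprodI.lift (fun v : V =>
      if h : v ∈ S then gpOf (SimpleGraph.comap ((↑) : S → V) Γ) (fun t => G t.1) ⟨v, h⟩
      else 1))
    (Subgroup.normalClosure_le_normal (by
      rintro x ⟨u, w, hadj, a, b, rfl⟩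
      rw [SetLike.mem_coe, MonoidHom.mem_ker, map_commutatorElement]
      simp only [Monoid.CoprodI.lift_of]
      refine commutatorElement_eq_one_iff_commute.2 ?_
      by_cases hu : u ∈ S
      · by_cases hw : w ∈ S
        · erw [dif_pos hu, dif_pos hw]
          exact gpOf_commute (SimpleGraph.comap ((↑) : S → V) Γ) (fun t => G t.1)
            (u := ⟨u, hu⟩) (w := ⟨w, hw⟩) hadj a b
        · erw [dif_neg hw]; simp
      · erw [dif_neg hu]; simp))

lemma gpRetr_ofSub_mk (S : Set V) (z : Monoid.CoprodI (fun s : S => G s.1)) :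
    gpRetr Γ G S (ofSub Γ G S (QuotientGroup.mk z)) = QuotientGroup.mk z := by
  induction z using Monoid.CoprodI.induction_on with
  | one =>
    show gpRetr Γ G S (ofSub Γ G S (1 : GPsub Γ G S)) = (1 : GPsub Γ G S)
    simp
  | of s a =>
    show gpRetr Γ G S (ofSub Γ G S (gpOf _ _ s a)) = gpOf _ _ s a
    show gpRetr Γ G S (QuotientGroup.mk (Monoid.CoprodI.of a)) = _
    unfold gpRetr
    erw [QuotientGroup.lift_mk, Monoid.CoprodI.lift_of, dif_pos s.2]
    rfl
  | mul x y hx hy =>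
    rw [show (QuotientGroup.mk (x * y) : GPsub Γ G S) =
        @HMul.hMul (GPsub Γ G S) (GPsub Γ G S) (GPsub Γ G S) _ (QuotientGroup.mk x) (QuotientGroup.mk y) from rfl]
    erw [map_mul, map_mul, hx, hy]

lemma gpRetr_ofSub (S : Set V) (x : GPsub Γ G S) :
    gpRetr Γ G S (ofSub Γ G S x) = x := by
  obtain ⟨z, rfl⟩ := QuotientGroup.mk_surjective x
  exact gpRetr_ofSub_mk Γ G S z

/-- The canonical map from the graph product over a full (induced) subgraph to the graph
product over the whole graph is injective, with image the subgroup generated by the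
images of the vertex groups of the subgraph: the special subgroup is canonically
isomorphic to the graph product over the induced subgraph. -/
theorem special_subgroup_isomorphic (S : Set V) :
    Function.Injective (ofSub Γ G S) ∧
    (∀ (s : S) (a : G s.1), ofSub Γ G S (gpOf _ _ s a) = gpOf Γ G s.1 a) ∧
    (ofSub Γ G S).range = Subgroup.closure (⋃ v ∈ S, Set.range (gpOf Γ G v)) := by
  have hof : ∀ (s : S) (a : G s.1), ofSub Γ G S (gpOf _ _ s a) = gpOf Γ G s.1 a := by
    intro s a; rfl
  refine ⟨Function.LeftInverse.injective (gpRetr_ofSub Γ G S), hof, le_antisymm ?_ ?_⟩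
  · rintro x ⟨y, rfl⟩
    obtain ⟨z, rfl⟩ := QuotientGroup.mk_surjective y
    induction z using Monoid.CoprodI.induction_on with
    | one =>
      show ofSub Γ G S (1 : GPsub Γ G S) ∈ _
      simpa using Subgroup.one_mem _
    | of s a =>
      refine Subgroup.subset_closure ?_
      rw [show ofSub Γ G S (QuotientGroup.mk (Monoid.CoprodI.of a)) = gpOf Γ G s.1 a
        from rfl]
      exact Set.mem_biUnion s.2 ⟨a, rfl⟩
    | mul x y hx hy =>
      rw [show (QuotientGroup.mk (x * y) : GPsub Γ G S) =
          @HMul.hMul (GPsub Γ G S) (GPsub Γ G S) (GPsub Γ G S) _ (QuotientGroup.mk x) (QuotientGroup.mk y) from rfl]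
      erw [map_mul]
      exact Subgroup.mul_mem _ hx hy
  · rw [Subgroup.closure_le]
    rintro x hx
    simp only [Set.mem_iUnion, Set.mem_range] at hx
    obtain ⟨v, hv, a, rfl⟩ := hx
    exact ⟨gpOf _ _ (⟨v, hv⟩ : S) a, rfl⟩
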